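/- For any a < b ≤ c < d in {1,…,n}, the crossing pair of mentions {[a,c],[b,d]} and the nested pair {[a,d],[b,c]} have identical separator sequences. -/
import Mathlib


inductive Marker | S | E | C
deriving DecidableEq

/-- Separator sequence of a set of mentions (intervals). Gap `k` lies between word `k` and word `k+1`. -/
def sep (M : Set (ℕ × ℕ)) (k : ℕ) : Set Marker :=
  {m | (m = Marker.S ∧ ∃ p ∈ M, p.1 = k + 1) ∨
       (m = Marker.E ∧ ∃ p ∈ M, p.2 = k) ∨
       (m = Marker.C ∧ ∃ p ∈ M, p.1 ≤ k ∧ k + 1 ≤ p.2)}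

/-- `M` is a set of mentions over a sentence of `n` words. -/
def Valid (n : ℕ) (M : Set (ℕ × ℕ)) : Prop :=
  ∀ p ∈ M, 1 ≤ p.1 ∧ p.1 ≤ p.2 ∧ p.2 ≤ n
theorem crossing_nested_same_separators (n a b c d : ℕ)
    (ha : 1 ≤ a) (hab : a < b) (hbc : b ≤ c) (hcd : c < d) (hdn : d ≤ n) :
    sep {(a, c), (b, d)} = sep {(a, d), (b, c)} := by
  funext k
  ext m
  simp only [sep, Set.mem_setOf_eq, Set.mem_insert_iff, Set.mem_singleton_iff]
  constructor <;> rintro (⟨hm,p,hp,h⟩|⟨hm,p,hp,h⟩|⟨hm,p,hp,h⟩) <;>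
    rcases hp with rfl|rfl <;> simp_all <;> omega
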